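/- For games H, K over a poset A: H ≤ K holds if and only if both H ≤_L K and H ≤_R K hold. -/

import Mathlib

inductive Game (A : Type) : Type 1 where
  | atom : A → Game A
  | comp : (ι κ : Type) → (ι → Game A) → (κ → Game A) → Nonempty ι → Nonempty κ → Game A

namespace Game

variable {A : Type}

/-- `G.IsAtom` holds iff `G` is an atomic game. -/
def IsAtom : Game A → Prop
  | atom _ => True
  | comp _ _ _ _ _ _ => False

/-- `G.IsLeftOption x`: `x` is a left option of `G`. -/
def IsLeftOption : Game A → Game A → Prop
  | atom _, _ => False
  | comp _ _ L _ _ _, x => ∃ i, L i = x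

/-- `G.IsRightOption y`: `y` is a right option of `G`. -/
def IsRightOption : Game A → Game A → Prop
  | atom _, _ => False
  | comp _ _ _ R _ _, x => ∃ j, R j = x

section Ord

variable [PartialOrder A]

mutual
  /-- The order relation `G ≤ H` on games over a poset. -/
  inductive Le : Game A → Game A → Prop
    | mk : ∀ {G H : Game A},
        (∀ x, G.IsLeftOption x → Tri x H) →
        (∀ y, H.IsRightOption y → Tri G y) →
        ((G.IsAtom ∨ H.IsAtom) → Tri G H) →
        Le G H
  /-- The relation `G ◁ H` on games over a poset. -/
  inductive Tri : Game A → Game A → Prop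
    | ofRight : ∀ {G H y : Game A}, G.IsRightOption y → Le y H → Tri G H
    | ofLeft : ∀ {G H x : Game A}, H.IsLeftOption x → Le G x → Tri G H
    | ofAtom : ∀ {a b : A}, a ≤ b → Tri (Game.atom a) (Game.atom b)
end

/-- Equivalence of games: `G ≤ H` and `H ≤ G`. -/
def Equiv (G H : Game A) : Prop := Le G H ∧ Le H G

/-- A game is monotone if all of its options are good, and recursively all
options are monotone. -/
inductive Monotone : Game A → Prop
  | mk : ∀ {G : Game A},
      (∀ x, G.IsLeftOption x → Le G x) →
      (∀ y, G.IsRightOption y → Le y G) →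
      (∀ x, G.IsLeftOption x → Monotone x) →
      (∀ y, G.IsRightOption y → Monotone y) →
      Monotone G

/-- A game is passable if `G ◁ G` and recursively all options are passable. -/
inductive Passable : Game A → Prop
  | mk : ∀ {G : Game A}, Tri G G →
      (∀ x, G.IsLeftOption x → Passable x) →
      (∀ y, G.IsRightOption y → Passable y) →
      Passable G

end Ord

end Game

namespace Game
variable {A : Type}

def subsIdx : Game A → Σ ι : Type, ι → Game A
  | atom a => ⟨Unit, fun _ => atom a⟩
  | comp ι κ L R h1 h2 =>
      ⟨Unit ⊕ ((Σ i : ι, (subsIdx (L i)).1) ⊕ (Σ j : κ, (subsIdx (R j)).1)),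
        Sum.elim (fun _ => comp ι κ L R h1 h2)
          (Sum.elim (fun iq => (subsIdx (L iq.1)).2 iq.2) (fun jq => (subsIdx (R jq.1)).2 jq.2))⟩

def Reach (G g : Game A) : Prop := ∃ p, (subsIdx G).2 p = g

lemma reach_self (G : Game A) : Reach G G := by
  cases G with
  | atom a => exact ⟨(), rfl⟩
  | comp ι κ L R h1 h2 => exact ⟨Sum.inl (), rfl⟩

lemma reach_left : ∀ {G g u : Game A}, Reach G g → g.IsLeftOption u → Reach G u := by
  intro G
  induction G with
  | atom a =>
      rintro g u ⟨p, hp⟩ hu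
      have : g = atom a := by rw [← hp]; rfl
      subst this; exact hu.elim
  | comp ι κ L R h1 h2 ihL ihR =>
      rintro g u ⟨p, hp⟩ hu
      rcases p with _ | (⟨i, q⟩ | ⟨j, q⟩)
      · have : g = comp ι κ L R h1 h2 := hp.symm
        subst this
        obtain ⟨i, hi⟩ := hu; subst hi
        obtain ⟨q0, hq0⟩ := reach_self (L i)
        exact ⟨Sum.inr (Sum.inl ⟨i, q0⟩), hq0⟩
      · obtain ⟨q', hq'⟩ := ihL i ⟨q, hp⟩ hu
        exact ⟨Sum.inr (Sum.inl ⟨i, q'⟩), hq'⟩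
      · obtain ⟨q', hq'⟩ := ihR j ⟨q, hp⟩ hu
        exact ⟨Sum.inr (Sum.inr ⟨j, q'⟩), hq'⟩

lemma reach_right : ∀ {G g u : Game A}, Reach G g → g.IsRightOption u → Reach G u := by
  intro G
  induction G with
  | atom a =>
      rintro g u ⟨p, hp⟩ hu
      have : g = atom a := by rw [← hp]; rfl
      subst this; exact hu.elim
  | comp ι κ L R h1 h2 ihL ihR =>
      rintro g u ⟨p, hp⟩ hu
      rcases p with _ | (⟨i, q⟩ | ⟨j, q⟩)
      · have : g = comp ι κ L R h1 h2 := hp.symm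
        subst this
        obtain ⟨j, hj⟩ := hu; subst hj
        obtain ⟨q0, hq0⟩ := reach_self (R j)
        exact ⟨Sum.inr (Sum.inr ⟨j, q0⟩), hq0⟩
      · obtain ⟨q', hq'⟩ := ihL i ⟨q, hp⟩ hu
        exact ⟨Sum.inr (Sum.inl ⟨i, q'⟩), hq'⟩
      · obtain ⟨q', hq'⟩ := ihR j ⟨q, hp⟩ hu
        exact ⟨Sum.inr (Sum.inr ⟨j, q'⟩), hq'⟩



section Ord
variable [PartialOrder A]

lemma leRefl : ∀ G : Game A, Le G G := by
  intro G
  induction G with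
  | atom a => exact Le.mk (fun x hx => hx.elim) (fun y hy => hy.elim) (fun _ => Tri.ofAtom le_rfl)
  | comp ι κ L R h1 h2 ihL ihR =>
      refine Le.mk ?_ ?_ ?_
      · rintro x ⟨i, rfl⟩; exact Tri.ofLeft ⟨i, rfl⟩ (ihL i)
      · rintro y ⟨j, rfl⟩; exact Tri.ofRight ⟨j, rfl⟩ (ihR j)
      · rintro (h | h) <;> exact h.elim

def Small (v : Game A) : Prop := ∀ r : Game A, Tri v r
def Big (v : Game A) : Prop := ∀ l : Game A, Tri l v

open Classical in
noncomputable def trapF (K v : Game A) : Game A :=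
  if h : Small v then K else Classical.choose (not_forall.mp h)

lemma trapF_spec (K v : Game A) (h : ¬ Small v) : ¬ Tri v (trapF K v) := by
  rw [trapF, dif_neg h]
  exact Classical.choose_spec (not_forall.mp h)

open Classical in
noncomputable def trapG (H v : Game A) : Game A :=
  if h : Big v then H else Classical.choose (not_forall.mp h)

lemma trapG_spec (H v : Game A) (h : ¬ Big v) : ¬ Tri (trapG H v) v := by
  rw [trapG, dif_neg h]
  exact Classical.choose_spec (not_forall.mp h)

def PPp (K : Game A) : Game A → Prop × Prop
  | atom a => (Small (atom a) ∧ Le (atom a) K, Le (atom a) K)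
  | comp ι κ L R h1 h2 =>
      (Small (comp ι κ L R h1 h2) ∧ ∀ i, (PPp K (L i)).2,
       Le (comp ι κ L R h1 h2) K ∨ ∃ j, (PPp K (R j)).1)

def PP (K g : Game A) : Prop := (PPp K g).1
def PP' (K g : Game A) : Prop := (PPp K g).2

def QQp (H : Game A) : Game A → Prop × Prop
  | atom a => (Big (atom a) ∧ Le H (atom a), Le H (atom a))
  | comp ι κ L R h1 h2 =>
      (Big (comp ι κ L R h1 h2) ∧ ∀ j, (QQp H (R j)).2,
       Le H (comp ι κ L R h1 h2) ∨ ∃ i, (QQp H (L i)).1)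

def QQ (H g : Game A) : Prop := (QQp H g).1
def QQ' (H g : Game A) : Prop := (QQp H g).2

variable {K H : Game A}

lemma PP_small {g : Game A} (h : PP K g) : Small g := by
  cases g <;> exact h.1

lemma PP_atom {g : Game A} (h : PP K g) (ha : g.IsAtom) : Le g K := by
  cases g with
  | atom a => exact h.2
  | comp ι κ L R h1 h2 => exact ha.elim

lemma PP_left {g u : Game A} (h : PP K g) (hu : g.IsLeftOption u) : PP' K u := by
  cases g with
  | atom a => exact hu.elim
  | comp ι κ L R h1 h2 => obtain ⟨i, rfl⟩ := hu; exact h.2 i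

lemma PP_mk {g : Game A} (hs : Small g) (ha : g.IsAtom → Le g K)
    (hl : ∀ u, g.IsLeftOption u → PP' K u) : PP K g := by
  cases g with
  | atom a => exact ⟨hs, ha trivial⟩
  | comp ι κ L R h1 h2 => exact ⟨hs, fun i => hl _ ⟨i, rfl⟩⟩

lemma PP'_elim {g : Game A} (h : PP' K g) :
    Le g K ∨ ∃ z, g.IsRightOption z ∧ PP K z := by
  cases g with
  | atom a => exact Or.inl h
  | comp ι κ L R h1 h2 =>
      rcases h with h | ⟨j, hj⟩
      · exact Or.inl h
      · exact Or.inr ⟨R j, ⟨j, rfl⟩, hj⟩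

lemma PP'_of_le {g : Game A} (h : Le g K) : PP' K g := by
  cases g with
  | atom a => exact h
  | comp ι κ L R h1 h2 => exact Or.inl h

lemma PP'_of_opt {g z : Game A} (hz : g.IsRightOption z) (h : PP K z) : PP' K g := by
  cases g with
  | atom a => exact hz.elim
  | comp ι κ L R h1 h2 => obtain ⟨j, rfl⟩ := hz; exact Or.inr ⟨j, h⟩

lemma QQ_big {g : Game A} (h : QQ H g) : Big g := by
  cases g <;> exact h.1

lemma QQ_atom {g : Game A} (h : QQ H g) (ha : g.IsAtom) : Le H g := by
  cases g with
  | atom a => exact h.2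
  | comp ι κ L R h1 h2 => exact ha.elim

lemma QQ_right {g w : Game A} (h : QQ H g) (hw : g.IsRightOption w) : QQ' H w := by
  cases g with
  | atom a => exact hw.elim
  | comp ι κ L R h1 h2 => obtain ⟨j, rfl⟩ := hw; exact h.2 j

lemma QQ_mk {g : Game A} (hb : Big g) (ha : g.IsAtom → Le H g)
    (hr : ∀ w, g.IsRightOption w → QQ' H w) : QQ H g := by
  cases g with
  | atom a => exact ⟨hb, ha trivial⟩
  | comp ι κ L R h1 h2 => exact ⟨hb, fun j => hr _ ⟨j, rfl⟩⟩

lemma QQ'_elim {g : Game A} (h : QQ' H g) :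
    Le H g ∨ ∃ m, g.IsLeftOption m ∧ QQ H m := by
  cases g with
  | atom a => exact Or.inl h
  | comp ι κ L R h1 h2 =>
      rcases h with h | ⟨i, hi⟩
      · exact Or.inl h
      · exact Or.inr ⟨L i, ⟨i, rfl⟩, hi⟩

lemma QQ'_of_le {g : Game A} (h : Le H g) : QQ' H g := by
  cases g with
  | atom a => exact h
  | comp ι κ L R h1 h2 => exact Or.inl h

lemma QQ'_of_opt {g m : Game A} (hm : g.IsLeftOption m) (h : QQ H m) : QQ' H g := by
  cases g with
  | atom a => exact hm.elim
  | comp ι κ L R h1 h2 => obtain ⟨i, rfl⟩ := hm; exact Or.inr ⟨i, h⟩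

lemma S_left (H K T : Game A)
    (tL : ∀ x, T.IsLeftOption x → x = K)
    (tNA : ∀ b, T ≠ atom b)
    (tTrap : ∀ v, Reach H v → ¬ Small v → ∃ y, T.IsRightOption y ∧ ¬ Tri v y) :
    ∀ g, Reach H g → (Le g T → PP K g) ∧ (Tri g T → PP' K g) := by
  intro g
  induction g with
  | atom a =>
      intro hreach
      constructor
      · intro hle
        cases hle with
        | mk h1 h2 h3 =>
          refine PP_mk ?_ ?_ (fun u hu => hu.elim)
          · by_contra hsm
            obtain ⟨y, hy, hny⟩ := tTrap _ hreach hsm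
            exact hny (h2 y hy)
          · intro _
            have htri := h3 (Or.inl trivial)
            cases htri with
            | ofRight hro _ => exact hro.elim
            | ofLeft hlo hle' => rw [tL _ hlo] at hle'; exact hle'
            | ofAtom h => exact absurd rfl (tNA _)
      · intro htri
        cases htri with
        | ofRight hro _ => exact hro.elim
        | ofLeft hlo hle' => rw [tL _ hlo] at hle'; exact PP'_of_le hle'
        | ofAtom h => exact absurd rfl (tNA _)
  | comp ι κ L R h1' h2' ihL ihR =>
      intro hreach
      constructor
      · intro hle
        cases hle with
        | mk h1 h2 h3 =>
          refine PP_mk ?_ (fun ha => ha.elim) ?_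
          · by_contra hsm
            obtain ⟨y, hy, hny⟩ := tTrap _ hreach hsm
            exact hny (h2 y hy)
          · rintro u hu
            have htri := h1 u hu
            obtain ⟨i, rfl⟩ := hu
            exact (ihL i (reach_left hreach ⟨i, rfl⟩)).2 htri
      · intro htri
        cases htri with
        | ofRight hro hle' =>
            obtain ⟨j, rfl⟩ := hro
            exact PP'_of_opt ⟨j, rfl⟩
              ((ihR j (reach_right hreach ⟨j, rfl⟩)).1 hle')
        | ofLeft hlo hle' => rw [tL _ hlo] at hle'; exact PP'_of_le hle'

lemma M_left (K : Game A) : ∀ g : Game A,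
    (PP K g → ∀ w, K.IsRightOption w → Le g w) ∧
    (PP' K g → ∀ w, K.IsRightOption w → Tri g w) := by
  intro g
  induction g with
  | atom a =>
      constructor
      · intro hp w hw
        exact Le.mk (fun u hu => hu.elim) (fun y _ => PP_small hp y) (fun _ => PP_small hp w)
      · intro hp' w hw
        rcases PP'_elim hp' with hle | ⟨z, hz, _⟩
        · cases hle with | mk _ h2 _ => exact h2 w hw
        · exact hz.elim
  | comp ι κ L R h1' h2' ihL ihR =>
      constructor
      · intro hp w hw
        refine Le.mk ?_ (fun y _ => PP_small hp y) (fun _ => PP_small hp w)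
        rintro u hu
        have hp'u := PP_left hp hu
        obtain ⟨i, rfl⟩ := hu
        exact (ihL i).2 hp'u w hw
      · intro hp' w hw
        rcases PP'_elim hp' with hle | ⟨z, hz, hpz⟩
        · cases hle with | mk _ h2 _ => exact h2 w hw
        · refine Tri.ofRight hz ?_
          obtain ⟨j, rfl⟩ := hz
          exact (ihR j).1 hpz w hw

lemma S_right (K H T : Game A)
    (tR : ∀ y, T.IsRightOption y → y = H)
    (tNA : ∀ b, T ≠ atom b)
    (tTrap : ∀ v, Reach K v → ¬ Big v → ∃ x, T.IsLeftOption x ∧ ¬ Tri x v) :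
    ∀ g, Reach K g → (Le T g → QQ H g) ∧ (Tri T g → QQ' H g) := by
  intro g
  induction g with
  | atom a =>
      intro hreach
      constructor
      · intro hle
        cases hle with
        | mk h1 h2 h3 =>
          refine QQ_mk ?_ ?_ (fun w hw => hw.elim)
          · by_contra hbg
            obtain ⟨x, hx, hnx⟩ := tTrap _ hreach hbg
            exact hnx (h1 x hx)
          · intro _
            have htri := h3 (Or.inr trivial)
            cases htri with
            | ofRight hro hle' => rw [tR _ hro] at hle'; exact hle'
            | ofLeft hlo _ => exact hlo.elim
            | ofAtom h => exact absurd rfl (tNA _)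
      · intro htri
        cases htri with
        | ofRight hro hle' => rw [tR _ hro] at hle'; exact QQ'_of_le hle'
        | ofLeft hlo _ => exact hlo.elim
        | ofAtom h => exact absurd rfl (tNA _)
  | comp ι κ L R h1' h2' ihL ihR =>
      intro hreach
      constructor
      · intro hle
        cases hle with
        | mk h1 h2 h3 =>
          refine QQ_mk ?_ (fun ha => ha.elim) ?_
          · by_contra hbg
            obtain ⟨x, hx, hnx⟩ := tTrap _ hreach hbg
            exact hnx (h1 x hx)
          · rintro w hw
            have htri := h2 w hw
            obtain ⟨j, rfl⟩ := hw
            exact (ihR j (reach_right hreach ⟨j, rfl⟩)).2 htri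
      · intro htri
        cases htri with
        | ofRight hro hle' => rw [tR _ hro] at hle'; exact QQ'_of_le hle'
        | ofLeft hlo hle' =>
            obtain ⟨i, rfl⟩ := hlo
            exact QQ'_of_opt ⟨i, rfl⟩
              ((ihL i (reach_left hreach ⟨i, rfl⟩)).1 hle')

lemma M_right (H : Game A) : ∀ g : Game A,
    (QQ H g → ∀ u, H.IsLeftOption u → Le u g) ∧
    (QQ' H g → ∀ u, H.IsLeftOption u → Tri u g) := by
  intro g
  induction g with
  | atom a =>
      constructor
      · intro hq u hu
        exact Le.mk (fun x _ => QQ_big hq x) (fun y hy => hy.elim) (fun _ => QQ_big hq u)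
      · intro hq' u hu
        rcases QQ'_elim hq' with hle | ⟨m, hm, _⟩
        · cases hle with | mk h1 _ _ => exact h1 u hu
        · exact hm.elim
  | comp ι κ L R h1' h2' ihL ihR =>
      constructor
      · intro hq u hu
        refine Le.mk (fun x _ => QQ_big hq x) ?_ (fun _ => QQ_big hq u)
        rintro w hw
        have hq'w := QQ_right hq hw
        obtain ⟨j, rfl⟩ := hw
        exact (ihR j).2 hq'w u hu
      · intro hq' u hu
        rcases QQ'_elim hq' with hle | ⟨m, hm, hqm⟩
        · cases hle with | mk h1 _ _ => exact h1 u hu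
        · refine Tri.ofLeft hm ?_
          obtain ⟨i, rfl⟩ := hm
          exact (ihL i).1 hqm u hu

lemma isAtom_exists_eq {G : Game A} (h : G.IsAtom) : ∃ a, G = atom a := by
  cases G with
  | atom a => exact ⟨a, rfl⟩
  | comp ι κ L R h1 h2 => exact h.elim

lemma step_left (H K : Game A)
    (hinst : Le
      (comp (Unit ⊕ Empty) ((subsIdx H).1 ⊕ Unit)
        (Sum.elim (fun _ => H) (fun e : Empty => e.elim))
        (Sum.elim (fun q => trapF K ((subsIdx H).2 q)) (fun _ => K))
        ⟨Sum.inl ()⟩ ⟨Sum.inr ()⟩)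
      (comp (Unit ⊕ Empty) ((subsIdx H).1 ⊕ Unit)
        (Sum.elim (fun _ => K) (fun e : Empty => e.elim))
        (Sum.elim (fun q => trapF K ((subsIdx H).2 q)) (fun _ => K))
        ⟨Sum.inl ()⟩ ⟨Sum.inr ()⟩)) :
    Le H K ∨ ∀ w, K.IsRightOption w → Tri H w := by
  cases hinst with
  | mk h1 h2 h3 =>
    have hTriH := h1 H ⟨Sum.inl (), rfl⟩
    cases hTriH with
    | ofLeft hlo hle =>
        obtain ⟨i, hi⟩ := hlo
        subst hi
        rcases i with _ | e
        · exact Or.inl hle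
        · exact e.elim
    | ofRight hro hle =>
        right; intro w hw
        refine Tri.ofRight hro ?_
        refine (M_left K _).1 ?_ w hw
        refine (S_left H K _ ?_ ?_ ?_ _ (reach_right (reach_self H) hro)).1 hle
        · rintro x ⟨i, hi⟩
          subst hi
          rcases i with _ | e
          · rfl
          · exact e.elim
        · intro b hb; cases hb
        · rintro v ⟨p, hp⟩ hsm
          refine ⟨trapF K v, ⟨Sum.inl p, ?_⟩, trapF_spec K v hsm⟩
          show trapF K ((subsIdx H).2 p) = trapF K v
          rw [hp]

lemma step_right (H K : Game A)
    (hinst : Le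
      (comp ((subsIdx K).1 ⊕ Unit) (Unit ⊕ Empty)
        (Sum.elim (fun q => trapG H ((subsIdx K).2 q)) (fun _ => H))
        (Sum.elim (fun _ => H) (fun e : Empty => e.elim))
        ⟨Sum.inr ()⟩ ⟨Sum.inl ()⟩)
      (comp ((subsIdx K).1 ⊕ Unit) (Unit ⊕ Empty)
        (Sum.elim (fun q => trapG H ((subsIdx K).2 q)) (fun _ => H))
        (Sum.elim (fun _ => K) (fun e : Empty => e.elim))
        ⟨Sum.inr ()⟩ ⟨Sum.inl ()⟩)) :
    Le H K ∨ ∀ u, H.IsLeftOption u → Tri u K := by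
  cases hinst with
  | mk h1 h2 h3 =>
    have hTriK := h2 K ⟨Sum.inl (), rfl⟩
    cases hTriK with
    | ofRight hro hle =>
        obtain ⟨j, hj⟩ := hro
        subst hj
        rcases j with _ | e
        · exact Or.inl hle
        · exact e.elim
    | ofLeft hlo hle =>
        right; intro u hu
        refine Tri.ofLeft hlo ?_
        refine (M_right H _).1 ?_ u hu
        refine (S_right K H _ ?_ ?_ ?_ _ (reach_left (reach_self K) hlo)).1 hle
        · rintro y ⟨j, hj⟩
          subst hj
          rcases j with _ | e
          · rfl
          · exact e.elim
        · intro b hb; cases hb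
        · rintro v ⟨p, hp⟩ hbg
          refine ⟨trapG H v, ⟨Sum.inl p, ?_⟩, trapG_spec H v hbg⟩
          show trapG H ((subsIdx K).2 p) = trapG H v
          rw [hp]


end Ord
end Game

/-- `H ≤ K` holds iff both `H ≤_L K` and `H ≤_R K` hold. -/
theorem Game.le_iff_leL_and_leR {A : Type} [PartialOrder A] (H K : Game A) :
    Game.Le H K ↔
      ((∀ (ιL ιR : Type) (L : ιL → Game A) (hR : Nonempty ιR) (R : ιR → Game A),
          Game.Le
            (Game.comp (Unit ⊕ ιL) ιR (Sum.elim (fun _ => H) L) R ⟨Sum.inl ()⟩ hR)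
            (Game.comp (Unit ⊕ ιL) ιR (Sum.elim (fun _ => K) L) R ⟨Sum.inl ()⟩ hR)) ∧
       (∀ (ιL ιR : Type) (hL : Nonempty ιL) (L : ιL → Game A) (R : ιR → Game A),
          Game.Le
            (Game.comp ιL (Unit ⊕ ιR) L (Sum.elim (fun _ => H) R) hL ⟨Sum.inl ()⟩)
            (Game.comp ιL (Unit ⊕ ιR) L (Sum.elim (fun _ => K) R) hL ⟨Sum.inl ()⟩))) := by
  constructor
  · intro hle
    constructor
    · intro ιL ιR L hRne R
      refine Le.mk ?_ ?_ ?_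
      · rintro x ⟨i, rfl⟩
        rcases i with u | i
        · exact Tri.ofLeft ⟨Sum.inl u, rfl⟩ hle
        · exact Tri.ofLeft ⟨Sum.inr i, rfl⟩ (leRefl _)
      · rintro y ⟨j, rfl⟩
        exact Tri.ofRight ⟨j, rfl⟩ (leRefl _)
      · rintro (h | h) <;> exact h.elim
    · intro ιL ιR hLne L R
      refine Le.mk ?_ ?_ ?_
      · rintro x ⟨i, rfl⟩
        exact Tri.ofLeft ⟨i, rfl⟩ (leRefl _)
      · rintro y ⟨j, rfl⟩
        rcases j with u | j
        · exact Tri.ofRight ⟨Sum.inl u, rfl⟩ hle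
        · exact Tri.ofRight ⟨Sum.inr j, rfl⟩ (leRefl _)
      · rintro (h | h) <;> exact h.elim
  · rintro ⟨hLord, hRord⟩
    have key1 := step_left H K
      (hLord Empty ((subsIdx H).1 ⊕ Unit) (fun e : Empty => e.elim) ⟨Sum.inr ()⟩
        (Sum.elim (fun q => trapF K ((subsIdx H).2 q)) (fun _ => K)))
    have key2 := step_right H K
      (hRord ((subsIdx K).1 ⊕ Unit) Empty ⟨Sum.inr ()⟩
        (Sum.elim (fun q => trapG H ((subsIdx K).2 q)) (fun _ => H))
        (fun e : Empty => e.elim))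
    rcases key1 with h | bR
    · exact h
    rcases key2 with h | bL
    · exact h
    refine Le.mk bL bR ?_
    intro hat
    have hLeHK : Le H K := by
      rcases hat with hH | hK
      · obtain ⟨a, rfl⟩ := isAtom_exists_eq hH
        have hinst := hLord Empty Unit (fun e : Empty => e.elim) ⟨()⟩ (fun _ => K)
        cases hinst with
        | mk h1 _ _ =>
          have htri := h1 (atom a) ⟨Sum.inl (), rfl⟩
          cases htri with
          | ofRight hro _ => exact hro.elim
          | ofLeft hlo hle =>
              obtain ⟨i, hi⟩ := hlo
              subst hi
              rcases i with _ | e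
              · exact hle
              · exact e.elim
      · obtain ⟨b, rfl⟩ := isAtom_exists_eq hK
        have hinst := hRord Unit Empty ⟨()⟩ (fun _ => H) (fun e : Empty => e.elim)
        cases hinst with
        | mk _ h2 _ =>
          have htri := h2 (atom b) ⟨Sum.inl (), rfl⟩
          cases htri with
          | ofRight hro hle =>
              obtain ⟨j, hj⟩ := hro
              subst hj
              rcases j with _ | e
              · exact hle
              · exact e.elim
          | ofLeft hlo _ => exact hlo.elim
    cases hLeHK with
    | mk _ _ h3 => exact h3 hat
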